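/- Let S be a finite monoid and A a finite set. For every set Q ⊆ SRel(A) of S-relations on A, the S-relational clone generated by Q equals the Galois closure of Q: [Q]_S = SInv(SPol Q). -/

import Mathlib

namespace SPreclone

/-- An `S`-operation on `A`: an `(n+1)`-ary operation together with a signum
assigning an element of `S` to each argument. -/
structure SOp (S A : Type*) where
  n : ℕ
  fn : (Fin (n + 1) → A) → A
  sgn : Fin (n + 1) → S

/-- An `S`-relation on `A`: a family of `(m+1)`-ary relations indexed by `S`. -/
structure SRel (S A : Type*) where
  m : ℕ
  rel : S → Set (Fin (m + 1) → A)

section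

variable {S A : Type*} [Monoid S]

/-- `f` S-preserves `ρ`. -/
def SPreserves (f : SOp S A) (ρ : SRel S A) : Prop :=
  ∀ s : S, ∀ r : Fin (f.n + 1) → (Fin (ρ.m + 1) → A),
    (∀ i, r i ∈ ρ.rel (f.sgn i * s)) →
    (fun j => f.fn fun i => r i j) ∈ ρ.rel s

/-- `S`-polymorphisms of a set of `S`-relations. -/
def SPol (Q : Set (SRel S A)) : Set (SOp S A) := { f | ∀ ρ ∈ Q, SPreserves f ρ }

/-- Invariant `S`-relations of a set of `S`-operations. -/
def SInv (F : Set (SOp S A)) : Set (SRel S A) := { ρ | ∀ f ∈ F, SPreserves f ρ }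

/-- The identity operation, with signum `(e)`. -/
def idOp (S A : Type*) [Monoid S] : SOp S A := ⟨0, fun x => x 0, fun _ => 1⟩

/-- Cyclic shift `ζ` of the arguments (and the signa). -/
def cycOp (f : SOp S A) : SOp S A :=
  ⟨f.n, fun x => f.fn fun j => x (j + 1), fun i => f.sgn (i - 1)⟩

/-- Transposition `τ` of the first two arguments (and their signa). -/
def swapOp (f : SOp S A) : SOp S A :=
  ⟨f.n, fun x => f.fn fun j => x (Equiv.swap 0 1 j), fun i => f.sgn (Equiv.swap 0 1 i)⟩

/-- `∇^s`: adding a fictitious first argument with signum `s`. -/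
def nablaOp (s : S) (f : SOp S A) : SOp S A :=
  ⟨f.n + 1, fun x => f.fn fun j => x j.succ, Fin.cases (motive := fun _ => S) s f.sgn⟩

open Classical in
/-- `Δ`: identification of the first two arguments when they have the same signum
(otherwise, and for unary operations, `Δ f := f`). -/
noncomputable def deltaOp (f : SOp S A) : SOp S A :=
  match f with
  | ⟨0, fn, sgn⟩ => ⟨0, fn, sgn⟩
  | ⟨m + 1, fn, sgn⟩ =>
    if sgn 0 = sgn 1 then
      ⟨m, fun x => fn fun j => x ⟨j.val - 1, by have := j.isLt; omega⟩,
        fun i => sgn i.succ⟩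
    else ⟨m + 1, fn, sgn⟩

/-- Composition `(f ∘ g)(x₁,…,x_m,x_{m+1},…,x_{m+n-1}) = f(g(x₁,…,x_m),x_{m+1},…,x_{m+n-1})`,
with signum `(s'₁s₁, …, s'_m s₁, s₂, …, s_n)`. -/
def compOp (f g : SOp S A) : SOp S A :=
  ⟨g.n + f.n,
   fun x => f.fn fun k => Fin.cases (motive := fun _ => A)
     (g.fn fun i => x ⟨i.val, by have := i.isLt; omega⟩)
     (fun j => x ⟨g.n + 1 + j.val, by have := j.isLt; omega⟩) k,
   fun i =>
     if h : i.val < g.n + 1 then g.sgn ⟨i.val, h⟩ * f.sgn 0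
     else f.sgn ⟨i.val - g.n, by have := i.isLt; omega⟩⟩

/-- A set of `S`-operations is an `S`-preclone if it contains the identity and is closed
under `ζ`, `τ`, `∇^s`, `Δ` and composition. -/
def IsSPreclone (F : Set (SOp S A)) : Prop :=
  idOp S A ∈ F ∧
  (∀ f ∈ F, cycOp f ∈ F) ∧
  (∀ f ∈ F, swapOp f ∈ F) ∧
  (∀ (s : S), ∀ f ∈ F, nablaOp s f ∈ F) ∧
  (∀ f ∈ F, deltaOp f ∈ F) ∧
  (∀ f ∈ F, ∀ g ∈ F, compOp f g ∈ F)

/-- The `S`-preclone generated by `F` (the least `S`-preclone containing `F`). -/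
def SSg (F : Set (SOp S A)) : Set (SOp S A) := ⋂₀ { G | IsSPreclone G ∧ F ⊆ G }

/-- `δ^S := (Δ_A)_{s ∈ S}`. -/
def deltaS (S A : Type*) : SRel S A := ⟨1, fun _ => { a | a 0 = a 1 }⟩

/-- Componentwise cyclic shift of coordinates. -/
def cycRel (ρ : SRel S A) : SRel S A :=
  ⟨ρ.m, fun s => { b | (fun i => b (i - 1)) ∈ ρ.rel s }⟩

/-- Componentwise transposition of the first two coordinates. -/
def swapRel (ρ : SRel S A) : SRel S A :=
  ⟨ρ.m, fun s => { b | (fun i => b (Equiv.swap 0 1 i)) ∈ ρ.rel s }⟩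

/-- Componentwise deletion of the first coordinate (identity on unary relations). -/
def prRel (ρ : SRel S A) : SRel S A :=
  match ρ with
  | ⟨0, r⟩ => ⟨0, r⟩
  | ⟨m + 1, r⟩ => ⟨m, fun s => { b | ∃ a ∈ r s, b = fun j => a j.succ }⟩

/-- Componentwise Cartesian product. -/
def prodRel (ρ ρ' : SRel S A) : SRel S A :=
  ⟨ρ.m + ρ'.m + 1, fun s =>
    { c | (fun i : Fin (ρ.m + 1) => c ⟨i.val, by have := i.isLt; omega⟩) ∈ ρ.rel s ∧
          (fun i : Fin (ρ'.m + 1) => c ⟨ρ.m + 1 + i.val, by have := i.isLt; omega⟩) ∈ ρ'.rel s }⟩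

/-- Componentwise intersection; empty if the arities differ. -/
def interRel (ρ ρ' : SRel S A) : SRel S A :=
  if h : ρ.m = ρ'.m then
    ⟨ρ.m, fun s => { a | a ∈ ρ.rel s ∧
        (fun i : Fin (ρ'.m + 1) => a (Fin.cast (by omega) i)) ∈ ρ'.rel s }⟩
  else ⟨ρ.m, fun _ => ∅⟩

/-- Index translation `μ_v(ρ) := (ρ_{sv})_{s ∈ S}`. -/
def muRel (v : S) (ρ : SRel S A) : SRel S A := ⟨ρ.m, fun s => ρ.rel (s * v)⟩

/-- `v`-self-intersection `(⊓^v ρ)_s := ⋂ { ρ_{s'} ∣ s'v = s }`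
(an empty intersection being the full relation). -/
def selfInterRel (v : S) (ρ : SRel S A) : SRel S A :=
  ⟨ρ.m, fun s => { a | ∀ s' : S, s' * v = s → a ∈ ρ.rel s' }⟩

/-- A set of `S`-relations is an `S`-relational clone if it contains `δ^S` and is
closed under `ζ`, `τ`, `pr`, `×`, `∧`, `μ_v` and `⊓^v`. -/
def IsSRelClone (Q : Set (SRel S A)) : Prop :=
  deltaS S A ∈ Q ∧
  (∀ ρ ∈ Q, cycRel ρ ∈ Q) ∧
  (∀ ρ ∈ Q, swapRel ρ ∈ Q) ∧
  (∀ ρ ∈ Q, prRel ρ ∈ Q) ∧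
  (∀ ρ ∈ Q, ∀ ρ' ∈ Q, prodRel ρ ρ' ∈ Q) ∧
  (∀ ρ ∈ Q, ∀ ρ' ∈ Q, interRel ρ ρ' ∈ Q) ∧
  (∀ (v : S), ∀ ρ ∈ Q, muRel v ρ ∈ Q) ∧
  (∀ (v : S), ∀ ρ ∈ Q, selfInterRel v ρ ∈ Q)

/-- The `S`-relational clone generated by `Q`. -/
def SRg (Q : Set (SRel S A)) : Set (SRel S A) := ⋂₀ { R | IsSRelClone R ∧ Q ⊆ R }

/-- `Γ_F(ρ)`: the least `S`-relation of the same arity containing `ρ` and invariant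
for `F` (defined as the intersection of all such). -/
def Gamma (F : Set (SOp S A)) (ρ : SRel S A) : SRel S A :=
  ⟨ρ.m, fun s => ⋂ g ∈ { g : S → Set (Fin (ρ.m + 1) → A) |
      (⟨ρ.m, g⟩ : SRel S A) ∈ SInv F ∧ ∀ t, ρ.rel t ⊆ g t }, g s⟩

/-- Trivial `S`-operations (trivial projections): projections whose essential
argument has signum `e`. -/
def SJ (S A : Type*) [Monoid S] : Set (SOp S A) :=
  { f | ∃ i : Fin (f.n + 1), f.sgn i = 1 ∧ ∀ x, f.fn x = x i }

/-- A diagonal relation: empty, or defined by an equivalence relation on the coordinates. -/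
def IsDiagonal {A : Type*} {m : ℕ} (σ : Set (Fin m → A)) : Prop :=
  σ = ∅ ∨ ∃ ε : Fin m → Fin m → Prop, Equivalence ε ∧ σ = { a | ∀ i j, ε i j → a i = a j }

/-- `S`-diagonal `S`-relations. -/
def SD (S A : Type*) [Monoid S] : Set (SRel S A) :=
  { ρ | (∀ s, IsDiagonal (ρ.rel s)) ∧
      ∀ s t : S, ({ x | ∃ u, x = u * s } : Set S) ⊆ { x | ∃ u, x = u * t } →
        ρ.rel s ⊆ ρ.rel t }

/-- Projection of an `S`-relation to the rows `z 0, …, z t` (componentwise). -/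
def prMulti {t : ℕ} (ρ : SRel S A) (z : Fin (t + 1) → Fin (ρ.m + 1)) : SRel S A :=
  ⟨t, fun s => { b | ∃ a ∈ ρ.rel s, b = fun j => a (z j) }⟩

/-- One step of the inductive construction of `Γ_F(ρ)`:
`R s ∪ { f(r₁,…,r_n) ∣ f ∈ F, r_j ∈ R (sgn(f)_j * s) }`. -/
def gammaStep (F : Set (SOp S A)) {m : ℕ}
    (R : S → Set (Fin (m + 1) → A)) : S → Set (Fin (m + 1) → A) :=
  fun s => R s ∪ { b | ∃ f ∈ F, ∃ r : Fin (f.n + 1) → (Fin (m + 1) → A),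
    (∀ j, r j ∈ R (f.sgn j * s)) ∧ b = fun z => f.fn fun j => r j z }

/-- `χ` is (a presentation of) the `S`-relation `χ^λ`: its rows are enumerated by
*all* tuples of `A^n` via `e`, and its `s`-component consists exactly of the columns
`κ_i` with `λ i = s`. -/
def IsChi {n : ℕ} (lam : Fin n → S) (χ : SRel S A) : Prop :=
  ∃ e : Fin (χ.m + 1) ≃ (Fin n → A),
    ∀ s, χ.rel s = { c | ∃ i, lam i = s ∧ c = fun z => e z i }

/-- `γ_Q(ρ)`: the least `S`-relation of the same arity containing `ρ` and belonging
to the `S`-relational clone generated by `Q` (defined as the intersection of all such). -/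
def gammaQ (Q : Set (SRel S A)) (ρ : SRel S A) : SRel S A :=
  ⟨ρ.m, fun s => ⋂ g ∈ { g : S → Set (Fin (ρ.m + 1) → A) |
      (⟨ρ.m, g⟩ : SRel S A) ∈ SRg Q ∧ ∀ t, ρ.rel t ⊆ g t }, g s⟩

/-- `π`-dual of an `S`-operation. -/
def opPi (π : Equiv.Perm A) (f : SOp S A) : SOp S A :=
  ⟨f.n, fun x => π (f.fn fun i => π.symm (x i)), f.sgn⟩

/-- `π`-dual of an `S`-relation. -/
def relPi (π : Equiv.Perm A) (ρ : SRel S A) : SRel S A :=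
  ⟨ρ.m, fun s => { b | ∃ a ∈ ρ.rel s, b = fun i => π (a i) }⟩

/-- `h`-dual of an `S`-operation (only the signum changes). -/
def opH (h : S ≃* S) (f : SOp S A) : SOp S A :=
  ⟨f.n, f.fn, fun i => h (f.sgn i)⟩

/-- `h`-dual of an `S`-relation: `ρ^h := (ρ_{h⁻¹(s)})_{s ∈ S}`. -/
def relH (h : S ≃* S) (ρ : SRel S A) : SRel S A :=
  ⟨ρ.m, fun s => ρ.rel (h.symm s)⟩

end

/-- An ordinary (unsigned) operation on `A`. -/
structure UOp (A : Type*) where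
  n : ℕ
  fn : (Fin (n + 1) → A) → A

/-- An ordinary (unsigned) relation on `A`. -/
structure URel (A : Type*) where
  m : ℕ
  rel : Set (Fin (m + 1) → A)

/-- Ordinary preservation of a relation by an operation. -/
def UPreserves {A : Type*} (f : UOp A) (σ : URel A) : Prop :=
  ∀ r : Fin (f.n + 1) → (Fin (σ.m + 1) → A),
    (∀ i, r i ∈ σ.rel) → (fun j => f.fn fun i => r i j) ∈ σ.rel

/-- Polymorphisms of a set of ordinary relations. -/
def UPol {A : Type*} (R : Set (URel A)) : Set (UOp A) := { f | ∀ σ ∈ R, UPreserves f σ }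

/-- A clone: contains all projections and is closed under composition. -/
def IsClone {A : Type*} (C : Set (UOp A)) : Prop :=
  (∀ (n : ℕ) (i : Fin (n + 1)), (⟨n, fun x => x i⟩ : UOp A) ∈ C) ∧
  (∀ f ∈ C, ∀ (m : ℕ) (g : Fin (f.n + 1) → ((Fin (m + 1) → A) → A)),
    (∀ i, (⟨m, g i⟩ : UOp A) ∈ C) → (⟨m, fun x => f.fn fun i => g i x⟩ : UOp A) ∈ C)

/-- The clone generated by a set of operations. -/
def CloneGen {A : Type*} (G : Set (UOp A)) : Set (UOp A) := ⋂₀ { C | IsClone C ∧ G ⊆ C }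


section Aux

variable {S A : Type*} [Monoid S]

open Classical

lemma pres_delta (f : SOp S A) : SPreserves f (deltaS S A) := by
  intro s r hr
  show f.fn (fun i => r i 0) = f.fn (fun i => r i 1)
  exact congrArg f.fn (funext fun i => hr i)

lemma SPreserves.cyc {f : SOp S A} {ρ : SRel S A} (h : SPreserves f ρ) :
    SPreserves f (cycRel ρ) := by
  intro s r hr
  have hr' : ∀ i, (fun j : Fin (ρ.m + 1) => r i ((j - 1 : Fin (ρ.m + 1)))) ∈ ρ.rel (f.sgn i * s) := hr
  exact h s _ hr'

lemma SPreserves.swap {f : SOp S A} {ρ : SRel S A} (h : SPreserves f ρ) :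
    SPreserves f (swapRel ρ) := by
  intro s r hr
  exact h s (fun i j => r i (Equiv.swap 0 1 j)) hr

lemma SPreserves.pr {f : SOp S A} {ρ : SRel S A} (h : SPreserves f ρ) :
    SPreserves f (prRel ρ) := by
  obtain ⟨m, R⟩ := ρ
  cases m with
  | zero => exact h
  | succ m =>
    intro s r hr
    choose a ha hb using hr
    have hre : r = fun i j => a i j.succ := funext fun i => hb i
    subst hre
    exact ⟨_, h s a ha, rfl⟩

lemma SPreserves.prod {f : SOp S A} {ρ ρ' : SRel S A} (h : SPreserves f ρ)
    (h' : SPreserves f ρ') : SPreserves f (prodRel ρ ρ') := by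
  intro s r hr
  exact ⟨h s _ (fun i => (hr i).1), h' s _ (fun i => (hr i).2)⟩

lemma SPreserves.inter {f : SOp S A} {ρ ρ' : SRel S A} (h : SPreserves f ρ)
    (h' : SPreserves f ρ') : SPreserves f (interRel ρ ρ') := by
  unfold interRel
  by_cases hm : ρ.m = ρ'.m
  · rw [dif_pos hm]
    intro s r hr
    refine ⟨h s _ (fun i => (hr i).1), ?_⟩
    exact h' s (fun i j => r i (Fin.cast (show ρ'.m + 1 = ρ.m + 1 by omega) j))
      (fun i => (hr i).2)
  · rw [dif_neg hm]
    intro s r hr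
    exact absurd (hr 0) (by simp)

lemma SPreserves.mu {f : SOp S A} {ρ : SRel S A} (h : SPreserves f ρ) (v : S) :
    SPreserves f (muRel v ρ) := by
  intro s r hr
  refine h (s * v) r (fun i => ?_)
  rw [← mul_assoc]
  exact hr i

lemma SPreserves.selfInter {f : SOp S A} {ρ : SRel S A} (h : SPreserves f ρ) (v : S) :
    SPreserves f (selfInterRel v ρ) := by
  intro s r hr s' hs'
  exact h s' r (fun i => hr i (f.sgn i * s') (by rw [mul_assoc, hs']))

lemma SInv_isSRelClone (F : Set (SOp S A)) : IsSRelClone (SInv F) :=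
  ⟨fun f _ => pres_delta f,
   fun _ h f hf => (h f hf).cyc,
   fun _ h f hf => (h f hf).swap,
   fun _ h f hf => (h f hf).pr,
   fun _ h _ h' f hf => (h f hf).prod (h' f hf),
   fun _ h _ h' f hf => (h f hf).inter (h' f hf),
   fun v _ h f hf => (h f hf).mu v,
   fun v _ h f hf => (h f hf).selfInter v⟩

lemma SRg_isSRelClone (Q : Set (SRel S A)) : IsSRelClone (SRg Q) :=
  ⟨fun _ hR => hR.1.1,
   fun _ h _ hR => hR.1.2.1 _ (h _ hR),
   fun _ h _ hR => hR.1.2.2.1 _ (h _ hR),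
   fun _ h _ hR => hR.1.2.2.2.1 _ (h _ hR),
   fun _ h _ h' _ hR => hR.1.2.2.2.2.1 _ (h _ hR) _ (h' _ hR),
   fun _ h _ h' _ hR => hR.1.2.2.2.2.2.1 _ (h _ hR) _ (h' _ hR),
   fun v _ h _ hR => hR.1.2.2.2.2.2.2.1 v _ (h _ hR),
   fun v _ h _ hR => hR.1.2.2.2.2.2.2.2 v _ (h _ hR)⟩

lemma subset_SRg (Q : Set (SRel S A)) : Q ⊆ SRg Q := fun _ h _ hR => hR.2 h

lemma SRg_subset {Q R : Set (SRel S A)} (hc : IsSRelClone R) (hq : Q ⊆ R) :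
    SRg Q ⊆ R := fun _ h => h R ⟨hc, hq⟩

lemma SRg_subset_SInv_SPol (Q : Set (SRel S A)) : SRg Q ⊆ SInv (SPol Q) :=
  SRg_subset (SInv_isSRelClone _) (fun ρ hρ f hf => hf ρ hρ)

end Aux


section Aux2

variable {S A : Type*} [Monoid S] (Q : Set (SRel S A))

/-- Membership of a presented `S`-relation in the generated `S`-relational clone. -/
def RMem (m : ℕ) (g : S → Set (Fin (m + 1) → A)) : Prop :=
  (⟨m, g⟩ : SRel S A) ∈ SRg Q

variable {Q}

lemma RMem.congr {m : ℕ} {g g' : S → Set (Fin (m + 1) → A)} (h : RMem Q m g)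
    (e : ∀ s, g s = g' s) : RMem Q m g' := by
  have : g = g' := funext e
  rwa [this] at h

lemma rmem_of_mem {ρ : SRel S A} (h : ρ ∈ SRg Q) : RMem Q ρ.m ρ.rel := h

lemma RMem.cast {m m' : ℕ} (e : m = m') {g : S → Set (Fin (m + 1) → A)} (h : RMem Q m g) :
    RMem Q m' (fun s => { b | (fun i : Fin (m + 1) => b (Fin.cast (by omega) i)) ∈ g s }) := by
  subst e
  exact h

lemma RMem.mu {m : ℕ} {g : S → Set (Fin (m + 1) → A)} (h : RMem Q m g) (v : S) :
    RMem Q m (fun s => g (s * v)) :=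
  (SRg_isSRelClone Q).2.2.2.2.2.2.1 v _ h

lemma RMem.selfInter {m : ℕ} {g : S → Set (Fin (m + 1) → A)} (h : RMem Q m g) (v : S) :
    RMem Q m (fun s => { a | ∀ s' : S, s' * v = s → a ∈ g s' }) :=
  (SRg_isSRelClone Q).2.2.2.2.2.2.2 v _ h

lemma RMem.cycP {m : ℕ} {g : S → Set (Fin (m + 1) → A)} (h : RMem Q m g) :
    RMem Q m (fun s => { b | (fun i => b (i - 1)) ∈ g s }) :=
  (SRg_isSRelClone Q).2.1 _ h

lemma RMem.swapP {m : ℕ} {g : S → Set (Fin (m + 1) → A)} (h : RMem Q m g) :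
    RMem Q m (fun s => { b | (fun i => b (Equiv.swap 0 1 i)) ∈ g s }) :=
  (SRg_isSRelClone Q).2.2.1 _ h

lemma RMem.pr {m : ℕ} {g : S → Set (Fin (m + 1 + 1) → A)} (h : RMem Q (m + 1) g) :
    RMem Q m (fun s => { b | ∃ a ∈ g s, b = fun j => a j.succ }) :=
  (SRg_isSRelClone Q).2.2.2.1 _ h

lemma RMem.prod {m m' : ℕ} {g : S → Set (Fin (m + 1) → A)} {g' : S → Set (Fin (m' + 1) → A)}
    (h : RMem Q m g) (h' : RMem Q m' g') :
    RMem Q (m + m' + 1) (prodRel (⟨m, g⟩ : SRel S A) (⟨m', g'⟩ : SRel S A)).rel :=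
  (SRg_isSRelClone Q).2.2.2.2.1 _ h _ h'

lemma RMem.inter {m : ℕ} {g g' : S → Set (Fin (m + 1) → A)} (h : RMem Q m g)
    (h' : RMem Q m g') : RMem Q m (fun s => g s ∩ g' s) := by
  have H := (SRg_isSRelClone Q).2.2.2.2.2.1 _ h _ h'
  unfold interRel at H
  rw [dif_pos rfl] at H
  have H' : RMem Q m (fun s =>
      { a : Fin (m + 1) → A | a ∈ g s ∧ (fun i : Fin (m + 1) => a (Fin.cast rfl i)) ∈ g' s }) := H
  exact RMem.congr H' (fun s => Set.ext fun a => by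
    have e : (fun i : Fin (m + 1) => a (Fin.cast rfl i)) = a := by
      funext i; rfl
    constructor
    · rintro ⟨h1, h2⟩
      exact ⟨h1, by rwa [e] at h2⟩
    · rintro ⟨h1, h2⟩
      exact ⟨h1, by rwa [e]⟩)

lemma RMem.deltaP : RMem Q 1 (fun _ : S => { a : Fin 2 → A | a 0 = a 1 }) :=
  (SRg_isSRelClone Q).1

lemma RMem.full0 : RMem Q 0 (fun _ : S => (Set.univ : Set (Fin 1 → A))) := by
  have h := RMem.pr (RMem.deltaP (Q := Q))
  exact h.congr (fun s => Set.ext fun b => by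
    simp only [Set.mem_setOf_eq, Set.mem_univ, iff_true]
    refine ⟨fun _ => b 0, rfl, funext fun j => congrArg b ?_⟩
    exact Fin.ext (by first | omega | (simp only [Fin.val_mk]; omega)))

lemma RMem.full (m : ℕ) : RMem Q m (fun _ : S => (Set.univ : Set (Fin (m + 1) → A))) := by
  induction m with
  | zero => exact RMem.full0
  | succ m ih =>
    have h := ih.prod (RMem.full0 (Q := Q))
    exact h.congr (fun s => Set.ext fun c => by
      simp [prodRel])

lemma RMem.empty (m : ℕ) : RMem Q m (fun _ : S => (∅ : Set (Fin (m + 1) → A))) := by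
  have H := (SRg_isSRelClone Q).2.2.2.2.2.1 _ (RMem.full (Q := Q) m) _
    (RMem.full (Q := Q) (m + 1))
  unfold interRel at H
  rw [dif_neg (by show ¬ m = m + 1; omega)] at H
  exact H

lemma RMem.biInter [Finite S] [Finite A] {m : ℕ}
    (G : Set (S → Set (Fin (m + 1) → A))) (hG : ∀ g ∈ G, RMem Q m g) :
    RMem Q m (fun s => ⋂ g ∈ G, g s) := by
  refine Set.Finite.induction_on
    (motive := fun G _ => (∀ g ∈ G, RMem Q m g) → RMem Q m (fun s => ⋂ g ∈ G, g s))
    G (Set.toFinite G) ?_ ?_ hG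
  · intro _
    exact (RMem.full (Q := Q) m).congr (fun s => by simp)
  · intro g₀ G' hg₀ hG'fin ih hIns
    have h₀ : RMem Q m g₀ := hIns g₀ (Set.mem_insert _ _)
    have hrest : RMem Q m (fun s => ⋂ g ∈ G', g s) :=
      ih (fun g hg => hIns g (Set.mem_insert_of_mem _ hg))
    exact (h₀.inter hrest).congr (fun s => by rw [Set.biInter_insert])


lemma RMem.permAux {m : ℕ} (π : Equiv.Perm (Fin (m + 1)))
    (hπ : ∀ g : S → Set (Fin (m + 1) → A), RMem Q m g →
      RMem Q m (fun s => { b | (fun i => b (π i)) ∈ g s }))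
    (π' : Equiv.Perm (Fin (m + 1)))
    (hπ' : ∀ g : S → Set (Fin (m + 1) → A), RMem Q m g →
      RMem Q m (fun s => { b | (fun i => b (π' i)) ∈ g s })) :
    ∀ g : S → Set (Fin (m + 1) → A), RMem Q m g →
      RMem Q m (fun s => { b | (fun i => b ((π * π') i)) ∈ g s }) := by
  intro g hg
  have h1 := hπ' g hg
  have h2 := hπ _ h1
  exact h2.congr (fun s => Set.ext fun b => by
    simp only [Set.mem_setOf_eq, Equiv.Perm.mul_apply])

lemma RMem.perm {m : ℕ} {g : S → Set (Fin (m + 1) → A)} (h : RMem Q m g)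
    (π : Equiv.Perm (Fin (m + 1))) :
    RMem Q m (fun s => { b | (fun i => b (π i)) ∈ g s }) := by
  set P : Set (Equiv.Perm (Fin (m + 1))) :=
    { π | ∀ g : S → Set (Fin (m + 1) → A), RMem Q m g →
      RMem Q m (fun s => { b | (fun i => b (π i)) ∈ g s }) } with hP
  have hone : (1 : Equiv.Perm (Fin (m + 1))) ∈ P := by
    intro g hg
    exact hg.congr (fun s => Set.ext fun b => by
      simp only [Set.mem_setOf_eq, Equiv.Perm.one_apply])
  have hmul : ∀ x y, x ∈ P → y ∈ P → x * y ∈ P := fun x y hx hy =>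
    RMem.permAux x hx y hy
  have hpow : ∀ (x : Equiv.Perm (Fin (m + 1))) (k : ℕ), x ∈ P → x ^ k ∈ P := by
    intro x k hx
    induction k with
    | zero => simpa using hone
    | succ k ih => rw [pow_succ]; exact hmul _ _ ih hx
  have hinv : ∀ x, x ∈ P → x⁻¹ ∈ P := by
    intro x hx
    have hord : x ^ orderOf x = 1 := pow_orderOf_eq_one x
    have hpos : 0 < orderOf x := orderOf_pos x
    have : x * x ^ (orderOf x - 1) = 1 := by
      rw [← pow_succ', Nat.sub_add_cancel hpos]
      exact hord
    rw [inv_eq_of_mul_eq_one_right this]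
    exact hpow _ _ hx
  -- the generators
  have hrot : Equiv.subRight (1 : Fin (m + 1)) ∈ P := fun g hg => hg.cycP
  have hswap : Equiv.swap (0 : Fin (m + 1)) 1 ∈ P := fun g hg => hg.swapP
  suffices hall : ∀ π' : Equiv.Perm (Fin (m + 1)), π' ∈ P from hall π g h
  intro π'
  rcases Nat.eq_zero_or_pos m with hm | hm
  · subst hm
    have : π' = 1 := Equiv.ext fun i => Fin.ext (by first | omega | (simp only [Fin.val_mk]; omega))
    rw [this]; exact hone
  · obtain ⟨m', rfl⟩ : ∃ m', m = m' + 1 := ⟨m - 1, by omega⟩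
    have hfin : finRotate (m' + 2) ∈ P := by
      have : finRotate (m' + 2) = (Equiv.subRight (1 : Fin (m' + 2)))⁻¹ := by
        have e1 : (Equiv.subRight (1 : Fin (m' + 2))).symm = Equiv.addRight 1 := by
          ext i
          simp [Equiv.subRight, Equiv.addRight, sub_eq_iff_eq_add]
        ext i
        rw [Equiv.Perm.inv_def, e1]
        simp [finRotate_succ_apply]
      rw [this]
      exact hinv _ hrot
    have hswap' : Equiv.swap (0 : Fin (m' + 2)) (finRotate (m' + 2) 0) ∈ P := by
      have : finRotate (m' + 2) (0 : Fin (m' + 2)) = 1 := by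
        rw [finRotate_succ_apply]; simp
      rw [this]; exact hswap
    have hgen : Subgroup.closure {finRotate (m' + 2), Equiv.swap (0 : Fin (m' + 2)) (finRotate (m' + 2) 0)} = ⊤ :=
      Equiv.Perm.closure_cycle_adjacent_swap (isCycle_finRotate) (support_finRotate) 0
    have hmem : π' ∈ Subgroup.closure {finRotate (m' + 2), Equiv.swap (0 : Fin (m' + 2)) (finRotate (m' + 2) 0)} := by
      rw [hgen]; trivial
    refine Subgroup.closure_induction ?_ hone (fun x y _ _ hx hy => hmul x y hx hy)
      (fun x _ hx => hinv x hx) hmem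
    intro x hx
    rcases hx with hx | hx
    · rw [hx]; exact hfin
    · rw [hx]; exact hswap'


lemma RMem.diag {M : ℕ} (p q : Fin (M + 1 + 1)) (hpq : p ≠ q) :
    RMem Q (M + 1) (fun _ : S => { x : Fin (M + 1 + 1) → A | x p = x q }) := by
  have hE : RMem Q (M + 1)
      (fun _ : S => { x : Fin (M + 1 + 1) → A | x ⟨M, by omega⟩ = x ⟨M + 1, by omega⟩ }) := by
    cases M with
    | zero =>
      exact (RMem.deltaP (Q := Q)).congr (fun s => rfl)
    | succ M' =>
      have h := (RMem.full (Q := Q) M').prod (RMem.deltaP (Q := Q))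
      exact h.congr (fun s => Set.ext fun c => by
        simp only [prodRel, Set.mem_setOf_eq, Set.mem_univ, true_and]
        constructor
        · intro hc
          have := hc
          exact hc
        · intro hc
          exact hc)
  set u0 : Fin (M + 1 + 1) := ⟨M, by omega⟩ with hu0
  set u1 : Fin (M + 1 + 1) := ⟨M + 1, by omega⟩ with hu1
  have hu01 : u0 ≠ u1 := by simp [hu0, hu1, Fin.ext_iff]
  set t1 : Equiv.Perm (Fin (M + 1 + 1)) := Equiv.swap u0 p with ht1
  have hne : u0 ≠ t1 q := by
    intro hc
    have : t1 u0 = t1 (t1 q) := congrArg t1 hc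
    rw [Equiv.swap_apply_left, Equiv.swap_apply_self] at this
    exact hpq this
  set π : Equiv.Perm (Fin (M + 1 + 1)) := t1 * Equiv.swap u1 (t1 q) with hπ
  have hπ0 : π u0 = p := by
    rw [hπ, Equiv.Perm.mul_apply,
      Equiv.swap_apply_of_ne_of_ne hu01 hne, ht1, Equiv.swap_apply_left]
  have hπ1 : π u1 = q := by
    rw [hπ, Equiv.Perm.mul_apply, Equiv.swap_apply_left, ht1, Equiv.swap_apply_self]
  have h2 := hE.perm π
  exact h2.congr (fun s => Set.ext fun b => by
    simp only [Set.mem_setOf_eq]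
    rw [hπ0, hπ1])

lemma RMem.projTail {M : ℕ} : ∀ (k : ℕ) {g : S → Set (Fin (M + k + 1) → A)},
    RMem Q (M + k) g →
    RMem Q M (fun s =>
      { b | ∃ a ∈ g s, b = fun i : Fin (M + 1) => a ⟨k + i.val, by omega⟩ }) := by
  intro k
  induction k with
  | zero =>
    intro g h
    exact h.congr (fun s => Set.ext fun b => by
      simp only [Set.mem_setOf_eq]
      constructor
      · rintro hb
        exact ⟨b, hb, funext fun i => congrArg b (Fin.ext (by simp))⟩
      · rintro ⟨a, ha, rfl⟩
        have : (fun i : Fin (M + 1) => a ⟨0 + i.val, by omega⟩) = a :=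
          funext fun i => congrArg a (Fin.ext (by simp))
        rwa [this])
  | succ k ih =>
    intro g h
    have h1 := RMem.pr (m := M + k) h
    have h2 := ih h1
    exact h2.congr (fun s => Set.ext fun b => by
      simp only [Set.mem_setOf_eq]
      constructor
      · rintro ⟨a', ⟨a, ha, rfl⟩, rfl⟩
        exact ⟨a, ha, funext fun i => congrArg a (Fin.ext (by simp; omega))⟩
      · rintro ⟨a, ha, rfl⟩
        refine ⟨fun j => a j.succ, ⟨a, ha, rfl⟩, funext fun i => congrArg a (Fin.ext ?_)⟩
        simp; omega)

lemma RMem.preimage [Finite S] [Finite A] {k M : ℕ} {g : S → Set (Fin (k + 1) → A)}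
    (h : RMem Q k g) (w : Fin (k + 1) → Fin (M + 1)) :
    RMem Q M (fun s => { c | (fun j => c (w j)) ∈ g s }) := by
  classical
  have hP : RMem Q (k + M + 1) (prodRel (⟨k, g⟩ : SRel S A) (⟨M, fun _ => Set.univ⟩ : SRel S A)).rel :=
    h.prod (RMem.full (Q := Q) M)
  set Gd : Set (S → Set (Fin (k + M + 1 + 1) → A)) :=
    { d | ∃ j : Fin (k + 1), d = fun _ =>
        { x : Fin (k + M + 1 + 1) → A | x ⟨j.val, by omega⟩ = x ⟨k + 1 + (w j).val, by omega⟩ } }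
    with hGd
  set G : Set (S → Set (Fin (k + M + 1 + 1) → A)) :=
    insert (prodRel (⟨k, g⟩ : SRel S A) (⟨M, fun _ => Set.univ⟩ : SRel S A)).rel Gd with hG
  have hGmem : ∀ d ∈ G, RMem Q (k + M + 1) d := by
    intro d hd
    rcases hd with rfl | hd
    · exact hP
    · obtain ⟨j, rfl⟩ := hd
      exact RMem.diag (M := k + M) ⟨j.val, by omega⟩ ⟨k + 1 + (w j).val, by omega⟩
        (by simp only [ne_eq, Fin.ext_iff]; omega)
  have hT : RMem Q (k + M + 1) (fun s => ⋂ d ∈ G, d s) := RMem.biInter G hGmem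
  have hT' := hT.cast (show k + M + 1 = M + (k + 1) by omega)
  have h3 := RMem.projTail (M := M) (k + 1) hT'
  refine h3.congr (fun s => Set.ext fun b => ?_)
  simp only [Set.mem_setOf_eq]
  constructor
  · rintro ⟨a, ha, rfl⟩
    have hprodm := Set.mem_iInter₂.1 ha _ (Set.mem_insert _ _)
    have hdiag : ∀ j : Fin (k + 1),
        a (Fin.cast (by omega) (⟨j.val, by omega⟩ : Fin (k + M + 1 + 1))) =
        a (Fin.cast (by omega) (⟨k + 1 + (w j).val, by omega⟩ : Fin (k + M + 1 + 1))) := by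
      intro j
      exact Set.mem_iInter₂.1 ha _ (Set.mem_insert_of_mem _ ⟨j, rfl⟩)
    have h1 : (fun i : Fin (k + 1) =>
        a (Fin.cast (by omega) (⟨i.val, by omega⟩ : Fin (k + M + 1 + 1)))) ∈ g s :=
      hprodm.1
    have e : (fun j => (fun i : Fin (M + 1) => a ⟨k + 1 + i.val, by omega⟩) (w j)) =
        (fun i : Fin (k + 1) =>
          a (Fin.cast (by omega) (⟨i.val, by omega⟩ : Fin (k + M + 1 + 1)))) := by
      funext j
      show a ⟨k + 1 + (w j).val, by omega⟩ = _
      exact (hdiag j).symm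
    rw [e]
    exact h1
  · intro hb
    refine ⟨fun v => if hv : v.val < k + 1 then b (w ⟨v.val, hv⟩)
      else b ⟨v.val - (k + 1), by omega⟩, ?_, ?_⟩
    · refine Set.mem_iInter₂.2 ?_
      intro d hd
      rcases hd with rfl | ⟨j, rfl⟩
      · refine ⟨?_, trivial⟩
        have e : (fun i : Fin (k + 1) =>
            (fun v : Fin (M + (k + 1) + 1) => if hv : v.val < k + 1 then b (w ⟨v.val, hv⟩)
              else b ⟨v.val - (k + 1), by omega⟩)
            (Fin.cast (by omega) (⟨i.val, by omega⟩ : Fin (k + M + 1 + 1)))) =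
            fun j => b (w j) := by
          funext i
          show (if hv : i.val < k + 1 then b (w ⟨i.val, hv⟩)
              else b ⟨i.val - (k + 1), by omega⟩) = b (w i)
          rw [dif_pos i.isLt]
        rw [e]
        exact hb
      · show (if hv : (j : ℕ) < k + 1 then _ else _) = (if hv : k + 1 + (w j).val < k + 1 then _ else _)
        rw [dif_pos (by omega : (j : ℕ) < k + 1), dif_neg (by omega : ¬ k + 1 + (w j).val < k + 1)]
        show b (w ⟨j.val, _⟩) = b ⟨k + 1 + (w j).val - (k + 1), _⟩
        have e1 : (⟨j.val, j.isLt⟩ : Fin (k + 1)) = j := rfl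
        have e2 : (⟨k + 1 + (w j).val - (k + 1), by omega⟩ : Fin (M + 1)) = w j :=
          Fin.ext (by first | omega | (simp only [Fin.val_mk]; omega))
        rw [e2]
    · funext i
      show b i = if hv : k + 1 + i.val < k + 1 then _ else _
      rw [dif_neg (by omega : ¬ k + 1 + i.val < k + 1)]
      exact congrArg b (Fin.ext (by first | omega | (simp only [Fin.val_mk]; omega)))

lemma RMem.proj [Finite S] [Finite A] {m t : ℕ} {g : S → Set (Fin (m + 1) → A)}
    (h : RMem Q m g) (z : Fin (t + 1) → Fin (m + 1)) :
    RMem Q t (fun s => { b | ∃ a ∈ g s, b = fun j => a (z j) }) := by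
  classical
  have hP : RMem Q (m + t + 1)
      (prodRel (⟨m, g⟩ : SRel S A) (⟨t, fun _ => Set.univ⟩ : SRel S A)).rel :=
    h.prod (RMem.full (Q := Q) t)
  set Gd : Set (S → Set (Fin (m + t + 1 + 1) → A)) :=
    { d | ∃ j : Fin (t + 1), d = fun _ =>
        { x : Fin (m + t + 1 + 1) → A | x ⟨(z j).val, by omega⟩ = x ⟨m + 1 + j.val, by omega⟩ } }
    with hGd
  set G : Set (S → Set (Fin (m + t + 1 + 1) → A)) :=
    insert (prodRel (⟨m, g⟩ : SRel S A) (⟨t, fun _ => Set.univ⟩ : SRel S A)).rel Gd with hG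
  have hGmem : ∀ d ∈ G, RMem Q (m + t + 1) d := by
    intro d hd
    rcases hd with rfl | ⟨j, rfl⟩
    · exact hP
    · exact RMem.diag (M := m + t) ⟨(z j).val, by omega⟩ ⟨m + 1 + j.val, by omega⟩
        (by simp only [ne_eq, Fin.ext_iff]; omega)
  have hT : RMem Q (m + t + 1) (fun s => ⋂ d ∈ G, d s) := RMem.biInter G hGmem
  have hT' := hT.cast (show m + t + 1 = t + (m + 1) by omega)
  have h3 := RMem.projTail (M := t) (m + 1) hT'
  refine h3.congr (fun s => Set.ext fun b => ?_)
  simp only [Set.mem_setOf_eq]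
  constructor
  · rintro ⟨a, ha, rfl⟩
    have hprodm := Set.mem_iInter₂.1 ha _ (Set.mem_insert _ _)
    have hdiag : ∀ j : Fin (t + 1),
        a (Fin.cast (by omega) (⟨(z j).val, by omega⟩ : Fin (m + t + 1 + 1))) =
        a (Fin.cast (by omega) (⟨m + 1 + j.val, by omega⟩ : Fin (m + t + 1 + 1))) := by
      intro j
      exact Set.mem_iInter₂.1 ha _ (Set.mem_insert_of_mem _ ⟨j, rfl⟩)
    refine ⟨fun i : Fin (m + 1) =>
        a (Fin.cast (by omega) (⟨i.val, by omega⟩ : Fin (m + t + 1 + 1))), hprodm.1, ?_⟩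
    funext j
    show a ⟨m + 1 + j.val, by omega⟩ = _
    exact (hdiag j).symm
  · rintro ⟨a0, ha0, rfl⟩
    refine ⟨fun v => if hv : v.val < m + 1 then a0 ⟨v.val, hv⟩
      else a0 (z ⟨v.val - (m + 1), by omega⟩), ?_, ?_⟩
    · refine Set.mem_iInter₂.2 ?_
      intro d hd
      rcases hd with rfl | ⟨j, rfl⟩
      · refine ⟨?_, trivial⟩
        have e : (fun i : Fin (m + 1) =>
            (fun v : Fin (t + (m + 1) + 1) => if hv : v.val < m + 1 then a0 ⟨v.val, hv⟩
              else a0 (z ⟨v.val - (m + 1), by omega⟩))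
            (Fin.cast (by omega) (⟨i.val, by omega⟩ : Fin (m + t + 1 + 1)))) = a0 := by
          funext i
          show (if hv : i.val < m + 1 then a0 ⟨i.val, hv⟩
              else a0 (z ⟨i.val - (m + 1), by omega⟩)) = a0 i
          rw [dif_pos i.isLt]
        rw [e]
        exact ha0
      · show (if hv : (z j).val < m + 1 then _ else _) = (if hv : m + 1 + j.val < m + 1 then _ else _)
        rw [dif_pos (by omega : (z j).val < m + 1), dif_neg (by omega : ¬ m + 1 + j.val < m + 1)]
        show a0 ⟨(z j).val, _⟩ = a0 (z ⟨m + 1 + j.val - (m + 1), _⟩)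
        have e2 : (⟨m + 1 + j.val - (m + 1), by omega⟩ : Fin (t + 1)) = j := Fin.ext (by first | omega | (simp only [Fin.val_mk]; omega))
        rw [e2]
    · funext j
      show a0 (z j) = if hv : m + 1 + j.val < m + 1 then _ else _
      rw [dif_neg (by omega : ¬ m + 1 + j.val < m + 1)]
      have e2 : (⟨m + 1 + j.val - (m + 1), by omega⟩ : Fin (t + 1)) = j := Fin.ext (by first | omega | (simp only [Fin.val_mk]; omega))
      rw [e2]

end Aux2


lemma masterLemma {S A : Type*} [Monoid S] [Fintype S] [Fintype A]
    (Q : Set (SRel S A)) (m : ℕ) (R : S → Set (Fin (m + 1) → A))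
    (hInv : (⟨m, R⟩ : SRel S A) ∈ SInv (SPol Q)) :
    ∃ U : S → Set (Fin (m + 1) → A), RMem Q m U ∧ (∀ t, R t ⊆ U t) ∧ U 1 ⊆ R 1 := by
  classical
  by_cases hemp : ∀ t, R t = ∅
  · exact ⟨fun _ => ∅, RMem.empty m, fun t => by rw [hemp t], by simp⟩
  · let ι := { p : S × (Fin (m + 1) → A) // p.2 ∈ R p.1 }
    have hι : Nonempty ι := by
      push_neg at hemp
      obtain ⟨t, ht⟩ := hemp
      obtain ⟨a, ha⟩ := ht
      exact ⟨⟨(t, a), ha⟩⟩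
    haveI : Fintype ι := Fintype.ofFinite ι
    haveI : Nonempty (ι → A) := ⟨fun p => p.1.2 0⟩
    haveI : Fintype (ι → A) := Fintype.ofFinite _
    set M : ℕ := Fintype.card (ι → A) - 1 with hM
    have hcard : Fintype.card (ι → A) = M + 1 := by
      have := Fintype.card_pos (α := ι → A); omega
    let e : Fin (M + 1) ≃ (ι → A) := (Fintype.equivFinOfCardEq hcard).symm
    set GT : Set (S → Set (Fin (M + 1) → A)) :=
      { gg | ∃ ρ' ∈ Q, ∃ (s₀ : S) (r : ι → (Fin (ρ'.m + 1) → A)),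
          (∀ p : ι, r p ∈ ρ'.rel (p.1.1 * s₀)) ∧
          gg = fun s => { c | (fun j => c (e.symm fun p => r p j)) ∈ ρ'.rel (s * s₀) } }
      with hGT
    have hGTmem : ∀ gg ∈ GT, RMem Q M gg := by
      rintro gg ⟨ρ', hρ', s₀, r, hr, rfl⟩
      have h0 : RMem Q ρ'.m ρ'.rel := subset_SRg Q hρ'
      exact (h0.mu s₀).preimage (fun j => e.symm fun p => r p j)
    have hTheta : RMem Q M (fun s => ⋂ gg ∈ GT, gg s) := RMem.biInter GT hGTmem
    set z : Fin (m + 1) → Fin (M + 1) := fun j => e.symm fun p : ι => p.1.2 j with hz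
    have hU := hTheta.proj z
    refine ⟨_, hU, ?_, ?_⟩
    · intro t a ha
      refine ⟨fun v => e v ⟨(t, a), ha⟩, ?_, ?_⟩
      · refine Set.mem_iInter₂.2 ?_
        rintro gg ⟨ρ', hρ', s₀, r, hr, rfl⟩
        show (fun j => e (e.symm fun p => r p j) ⟨(t, a), ha⟩) ∈ ρ'.rel (t * s₀)
        have e1 : (fun j => e (e.symm fun p => r p j) ⟨(t, a), ha⟩) = r ⟨(t, a), ha⟩ := by
          funext j; rw [Equiv.apply_symm_apply]
        rw [e1]
        exact hr ⟨(t, a), ha⟩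
      · funext j
        show a j = e (e.symm fun p : ι => p.1.2 j) ⟨(t, a), ha⟩
        rw [Equiv.apply_symm_apply]
    · rintro b ⟨c, hc, rfl⟩
      set n' : ℕ := Fintype.card ι - 1 with hn'
      have hcι : Fintype.card ι = n' + 1 := by
        have := Fintype.card_pos (α := ι); omega
      let idx : ι ≃ Fin (n' + 1) := Fintype.equivFinOfCardEq hcι
      set f : SOp S A := ⟨n', fun x => c (e.symm fun p => x (idx p)), fun i => (idx.symm i).1.1⟩
        with hf
      have hfpol : f ∈ SPol Q := by
        intro ρ' hρ' s₀ r' hr'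
        have hadm : ∀ p : ι, r' (idx p) ∈ ρ'.rel (p.1.1 * s₀) := by
          intro p
          have h1 := hr' (idx p)
          have e2 : f.sgn (idx p) = p.1.1 := by
            show (idx.symm (idx p)).1.1 = p.1.1
            rw [Equiv.symm_apply_apply]
          rwa [e2] at h1
        have hcc := Set.mem_iInter₂.1 hc
          (fun s => { c' | (fun j => c' (e.symm fun p => r' (idx p) j)) ∈ ρ'.rel (s * s₀) })
          ⟨ρ', hρ', s₀, fun p => r' (idx p), hadm, rfl⟩
        have hcc' : (fun j => c (e.symm fun p => r' (idx p) j)) ∈ ρ'.rel (1 * s₀) := hcc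
        rw [one_mul] at hcc'
        exact hcc'
      have happ := hInv f hfpol 1 (fun i => (idx.symm i).1.2) (fun i => by
        rw [mul_one]
        exact (idx.symm i).2)
      have e3 : (fun j => c (z j)) = fun j => f.fn fun i => (idx.symm i).1.2 j := by
        funext j
        show c (e.symm fun p : ι => p.1.2 j) = c (e.symm fun p => (idx.symm (idx p)).1.2 j)
        simp
      rw [e3]
      exact happ

/-- **Theorem II.** For a finite monoid `S`, a finite set `A` and any set `Q` of
`S`-relations on `A`, the `S`-relational clone generated by `Q` equals the Galois
closure `SInv (SPol Q)`. -/
theorem SRg_eq_SInv_SPol {S A : Type*} [Monoid S] [Fintype S] [Fintype A]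
    (Q : Set (SRel S A)) :
    SRg Q = SInv (SPol Q) := by
  apply Set.Subset.antisymm
  · exact SRg_subset_SInv_SPol Q
  · intro ρ hρ
    obtain ⟨m, R⟩ := ρ
    have hT : ∀ s' : S, ∃ T : S → Set (Fin (m + 1) → A), RMem Q m T ∧
        (∀ t, R t ⊆ T t) ∧ T s' ⊆ R s' := by
      intro s'
      have hmu : (⟨m, fun t => R (t * s')⟩ : SRel S A) ∈ SInv (SPol Q) :=
        (SInv_isSRelClone (SPol Q)).2.2.2.2.2.2.1 s' _ hρ
      obtain ⟨U, hU, hU1, hU2⟩ := masterLemma Q m _ hmu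
      refine ⟨fun t => { a | ∀ t', t' * s' = t → a ∈ U t' }, hU.selfInter s', ?_, ?_⟩
      · intro t a ha t' ht'
        exact hU1 t' (show a ∈ R (t' * s') by rw [ht']; exact ha)
      · intro a ha
        have h1 := ha 1 (one_mul s')
        have h2 := hU2 h1
        rwa [one_mul] at h2
    choose T hT1 hT2 hT3 using hT
    have hmem : RMem Q m (fun s => ⋂ g ∈ Set.range T, g s) :=
      RMem.biInter _ (by rintro g ⟨s', rfl⟩; exact hT1 s')
    refine RMem.congr hmem (fun s => Set.ext fun a => ?_)
    simp only [Set.mem_iInter, Set.mem_range]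
    constructor
    · intro h
      exact hT3 s (h (T s) ⟨s, rfl⟩)
    · intro h g hg
      obtain ⟨s', rfl⟩ := hg
      exact hT2 s' s h

end SPreclone
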